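/- The Iwahori–Hecke algebra ℋ_r over a commutative domain R with invertible parameter q is a free R-module with basis {T_w : w ∈ 𝔖_r}, where T_w = T_{i_1}⋯T_{i_s} for any reduced expression w = s_{i_1}⋯s_{i_s}. -/

import Mathlib

open Finset

def permLength {r : ℕ} (w : Equiv.Perm (Fin r)) : ℕ :=
  (Finset.univ.filter (fun p : Fin r × Fin r => p.1 < p.2 ∧ w p.2 < w p.1)).card

/-- defining relations of the Iwahori–Hecke algebra of `𝔖_r` (generators `T_1,…,T_{r-1}`). -/
inductive HeckeRel (R : Type) [CommRing R] (q : R) (m : ℕ) :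
    FreeAlgebra R (Fin m) → FreeAlgebra R (Fin m) → Prop
  | quad (i : Fin m) :
      HeckeRel R q m ((FreeAlgebra.ι R i - algebraMap R _ q) * (FreeAlgebra.ι R i + 1)) 0
  | comm (i j : Fin m) (h : (i : ℕ) + 1 < (j : ℕ)) :
      HeckeRel R q m (FreeAlgebra.ι R i * FreeAlgebra.ι R j)
        (FreeAlgebra.ι R j * FreeAlgebra.ι R i)
  | braid (i j : Fin m) (h : (j : ℕ) = (i : ℕ) + 1) :
      HeckeRel R q m (FreeAlgebra.ι R i * FreeAlgebra.ι R j * FreeAlgebra.ι R i)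
        (FreeAlgebra.ι R j * FreeAlgebra.ι R i * FreeAlgebra.ι R j)

/-- the Iwahori–Hecke algebra `ℋ_r` of `𝔖_r` over `R` with parameter `q`. -/
abbrev Hecke (R : Type) [CommRing R] (q : R) (r : ℕ) : Type := RingQuot (HeckeRel R q (r-1))

/-- the generator `T_i` of the Hecke algebra -/
def Tgen (R : Type) [CommRing R] (q : R) (r : ℕ) (i : Fin (r-1)) : Hecke R q r :=
  RingQuot.mkAlgHom R (HeckeRel R q (r-1)) (FreeAlgebra.ι R i)

/-- the simple reflection `s_i = (i, i+1)` in `𝔖_r` -/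
def simpleRefl (r : ℕ) (i : Fin (r-1)) : Equiv.Perm (Fin r) :=
  Equiv.swap ⟨(i : ℕ), by have := i.isLt; omega⟩ ⟨(i : ℕ) + 1, by have := i.isLt; omega⟩

/-- `T` is the family `{T_w}` : `T_w = T_{i_1} ⋯ T_{i_s}` for any reduced expression
`w = s_{i_1} ⋯ s_{i_s}` (a word is reduced iff its length equals the inversion number). -/
def IsTFamily (R : Type) [CommRing R] (q : R) (r : ℕ)
    (T : Equiv.Perm (Fin r) → Hecke R q r) : Prop :=
  ∀ (w : Equiv.Perm (Fin r)) (l : List (Fin (r-1))),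
    w = (l.map (simpleRefl r)).prod → l.length = permLength w →
    T w = (l.map (Tgen R q r)).prod

namespace HeckeWork

variable {r : ℕ}

abbrev Inv (w : Equiv.Perm (Fin r)) : Finset (Fin r × Fin r) :=
  Finset.univ.filter (fun p : Fin r × Fin r => p.1 < p.2 ∧ w p.2 < w p.1)

lemma permLength_def (w : Equiv.Perm (Fin r)) : permLength w = (Inv w).card := rfl

lemma swap_adj_lt {a b : Fin r} (hab : (b:ℕ) = a + 1) {u v : Fin r} (huv : u < v) :
    Equiv.swap a b v < Equiv.swap a b u ↔ u = a ∧ v = b := by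
  rcases eq_or_ne u a with rfl|hua <;> rcases eq_or_ne v b with rfl|hvb <;>
    simp only [Equiv.swap_apply_def, Fin.lt_def, Fin.ext_iff] at * <;>
    split_ifs <;> simp_all <;> omega

lemma swap_adj_lt' {a b : Fin r} (hab : (b:ℕ) = a + 1) {u v : Fin r} (huv : u < v)
    (h : ¬(u = a ∧ v = b)) : Equiv.swap a b u < Equiv.swap a b v := by
  rcases lt_trichotomy (Equiv.swap a b u) (Equiv.swap a b v) with h'|h'|h'
  · exact h'
  · exact absurd ((Equiv.swap a b).injective h') (ne_of_lt huv)
  · exact absurd ((swap_adj_lt hab huv).1 h') h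

lemma length_swap_mul_of_lt {a b : Fin r} (hab : (b:ℕ) = a + 1) (w : Equiv.Perm (Fin r))
    (h : w⁻¹ a < w⁻¹ b) :
    permLength (Equiv.swap a b * w) = permLength w + 1 := by
  have hmem : (w⁻¹ a, w⁻¹ b) ∉ Inv w := by
    simp only [Finset.mem_filter, Finset.mem_univ, true_and, not_and]
    intro _
    simp only [Equiv.Perm.inv_def, Equiv.apply_symm_apply]
    exact fun hc => absurd hab (by omega)
  have hset : Inv (Equiv.swap a b * w) = insert (w⁻¹ a, w⁻¹ b) (Inv w) := by
    ext p
    simp only [Finset.mem_insert, Finset.mem_filter, Finset.mem_univ, true_and,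
      Equiv.Perm.mul_apply]
    constructor
    · rintro ⟨h12, hlt⟩
      rcases lt_trichotomy (w p.1) (w p.2) with hw|hw|hw
      · obtain ⟨h1, h2⟩ := (swap_adj_lt hab hw).1 hlt
        left
        have e1 : p.1 = w⁻¹ a := by rw [← h1]; simp
        have e2 : p.2 = w⁻¹ b := by rw [← h2]; simp
        exact Prod.ext e1 e2
      · exact absurd (w.injective hw) (ne_of_lt h12)
      · exact Or.inr ⟨h12, hw⟩
    · rintro (rfl | ⟨h12, hw⟩)
      · refine ⟨h, ?_⟩
        simp only [Equiv.Perm.inv_def, Equiv.apply_symm_apply]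
        have := (swap_adj_lt hab h)
        simp only [Equiv.swap_apply_left, Equiv.swap_apply_right] at *
        exact Fin.lt_def.2 (by omega)
      · refine ⟨h12, ?_⟩
        apply swap_adj_lt' hab hw
        rintro ⟨ha, hb⟩
        have e1 : p.2 = w⁻¹ a := by rw [← ha]; simp
        have e2 : p.1 = w⁻¹ b := by rw [← hb]; simp
        rw [e1, e2] at h12
        exact absurd h (not_lt.2 h12.le)
  rw [permLength_def, permLength_def, hset, Finset.card_insert_of_notMem hmem]

lemma length_swap_mul_of_gt {a b : Fin r} (hab : (b:ℕ) = a + 1) (w : Equiv.Perm (Fin r))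
    (h : w⁻¹ b < w⁻¹ a) :
    permLength w = permLength (Equiv.swap a b * w) + 1 := by
  have key := length_swap_mul_of_lt hab (Equiv.swap a b * w) (by
    simp only [mul_inv_rev, Equiv.Perm.mul_apply]
    simpa using h)
  have : Equiv.swap a b * (Equiv.swap a b * w) = w := by
    rw [← mul_assoc, Equiv.swap_mul_self, one_mul]
  rwa [this] at key

lemma length_one : permLength (1 : Equiv.Perm (Fin r)) = 0 := by
  rw [permLength_def]
  rw [Finset.card_eq_zero]
  ext p
  simp only [Finset.mem_filter, Finset.mem_univ, true_and, Finset.notMem_empty, iff_false]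
  rintro ⟨h1, h2⟩
  simp only [Equiv.Perm.one_apply] at h2
  exact absurd h1 (not_lt.2 h2.le)

lemma eq_one_of_length_eq_zero {w : Equiv.Perm (Fin r)} (h : permLength w = 0) : w = 1 := by
  rw [permLength_def, Finset.card_eq_zero] at h
  have hmono : StrictMono w := by
    intro u v huv
    rcases lt_trichotomy (w u) (w v) with h'|h'|h'
    · exact h'
    · exact absurd (w.injective h') (ne_of_lt huv)
    · exfalso
      have : (u, v) ∈ Inv w := by
        simp only [Finset.mem_filter, Finset.mem_univ, true_and]
        exact ⟨huv, h'⟩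
      rw [h] at this
      exact absurd this (Finset.notMem_empty _)
  have : ∀ x, w x = x := by
    intro x
    let e : Fin r ≃o Fin r :=
      { toEquiv := w, map_rel_iff' := by intro u v; exact hmono.le_iff_le }
    have h2 : (w x : ℕ) = x := Fin.coe_orderIso_apply e x
    exact Fin.ext h2
  exact Equiv.ext this

lemma length_inv (w : Equiv.Perm (Fin r)) : permLength w⁻¹ = permLength w := by
  rw [permLength_def, permLength_def]
  apply Finset.card_bij' (fun p _ => (w⁻¹ p.2, w⁻¹ p.1)) (fun p _ => (w p.2, w p.1))
  · rintro p hp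
    simp only [Finset.mem_filter, Finset.mem_univ, true_and] at *
    simpa using ⟨hp.2, hp.1⟩
  · rintro p hp
    simp only [Finset.mem_filter, Finset.mem_univ, true_and] at *
    simpa using ⟨hp.2, hp.1⟩
  · rintro p hp; simp
  · rintro p hp; simp


section Part2
variable {r : ℕ}

/-- position `i` as an element of `Fin r` -/
def pA (i : Fin (r-1)) : Fin r := ⟨(i : ℕ), by have := i.isLt; omega⟩
def pB (i : Fin (r-1)) : Fin r := ⟨(i : ℕ) + 1, by have := i.isLt; omega⟩

lemma pB_val (i : Fin (r-1)) : ((pB i : Fin r) : ℕ) = (pA i : Fin r) + 1 := rfl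

lemma simpleRefl_eq (i : Fin (r-1)) : simpleRefl r i = Equiv.swap (pA i) (pB i) := rfl

lemma pA_ne_pB (i : Fin (r-1)) : (pA i : Fin r) ≠ pB i := by
  simp [pA, pB, Fin.ext_iff]

lemma length_sr_mul_of_lt (i : Fin (r-1)) (w : Equiv.Perm (Fin r))
    (h : w⁻¹ (pA i) < w⁻¹ (pB i)) :
    permLength (simpleRefl r i * w) = permLength w + 1 :=
  length_swap_mul_of_lt (pB_val i) w h

lemma length_sr_mul_of_gt (i : Fin (r-1)) (w : Equiv.Perm (Fin r))
    (h : w⁻¹ (pB i) < w⁻¹ (pA i)) :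
    permLength w = permLength (simpleRefl r i * w) + 1 :=
  length_swap_mul_of_gt (pB_val i) w h

lemma lc_or_gc (i : Fin (r-1)) (w : Equiv.Perm (Fin r)) :
    w⁻¹ (pA i) < w⁻¹ (pB i) ∨ w⁻¹ (pB i) < w⁻¹ (pA i) := by
  rcases lt_trichotomy (w⁻¹ (pA i)) (w⁻¹ (pB i)) with h|h|h
  · exact Or.inl h
  · exact absurd (w⁻¹.injective h) (pA_ne_pB i)
  · exact Or.inr h

lemma strictMono_of_adj {f : Fin r → Fin r}
    (h : ∀ k, (hk : k + 1 < r) → f ⟨k, by omega⟩ < f ⟨k+1, hk⟩) : StrictMono f := by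
  have key : ∀ d : ℕ, ∀ u v : Fin r, (v : ℕ) = (u : ℕ) + d + 1 → f u < f v := by
    intro d
    induction d with
    | zero =>
      intro u v hv
      have hb : (u : ℕ) + 1 < r := by have := v.isLt; omega
      have h2 := h (u : ℕ) hb
      have e1 : (⟨(u : ℕ), by omega⟩ : Fin r) = u := Fin.ext rfl
      have e2 : (⟨(u : ℕ) + 1, hb⟩ : Fin r) = v := Fin.ext (by show (u:ℕ)+1 = (v:ℕ); omega)
      rwa [e1, e2] at h2
    | succ d ih =>
      intro u v hv
      have hb2 : (u : ℕ) + d + 1 + 1 < r := by have := v.isLt; omega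
      have h2 := h ((u : ℕ) + d + 1) hb2
      have e2 : (⟨(u : ℕ) + d + 1 + 1, hb2⟩ : Fin r) = v := Fin.ext (by show (u:ℕ)+d+1+1 = (v:ℕ); omega)
      rw [e2] at h2
      exact lt_trans (ih u ⟨(u : ℕ) + d + 1, by omega⟩ rfl) h2
  intro u v huv
  have : (v : ℕ) = (u : ℕ) + ((v : ℕ) - (u : ℕ) - 1) + 1 := by
    have := Fin.lt_def.1 huv; omega
  exact key _ u v this

lemma perm_eq_one_of_strictMono {w : Equiv.Perm (Fin r)} (h : StrictMono w) : w = 1 := by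
  have : ∀ x, w x = x := by
    intro x
    let e : Fin r ≃o Fin r :=
      { toEquiv := w, map_rel_iff' := by intro u v; exact h.le_iff_le }
    have h2 : (w x : ℕ) = x := Fin.coe_orderIso_apply e x
    exact Fin.ext h2
  exact Equiv.ext this

lemma exists_descent {w : Equiv.Perm (Fin r)} (hw : w ≠ 1) :
    ∃ i : Fin (r-1), w⁻¹ (pB i) < w⁻¹ (pA i) := by
  by_contra hc
  push_neg at hc
  apply hw
  have hmono : StrictMono (w⁻¹ : Equiv.Perm (Fin r)) := by
    apply strictMono_of_adj
    intro k hk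
    have i : Fin (r-1) := ⟨k, by omega⟩
    have h1 := hc ⟨k, by omega⟩
    rcases lc_or_gc ⟨k, by omega⟩ w with h2|h2
    · exact h2
    · exact absurd h2 (not_lt.2 h1)
  have := perm_eq_one_of_strictMono hmono
  have : w⁻¹⁻¹ = (1 : Equiv.Perm (Fin r))⁻¹ := by rw [this]
  simpa using this

lemma exists_reduced_word (w : Equiv.Perm (Fin r)) :
    ∃ l : List (Fin (r-1)), (l.map (simpleRefl r)).prod = w ∧ l.length = permLength w := by
  generalize hn : permLength w = n
  induction n generalizing w with
  | zero =>
    exact ⟨[], by simp [eq_one_of_length_eq_zero hn], by simp⟩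
  | succ n ih =>
    have hw : w ≠ 1 := by
      rintro rfl
      rw [length_one] at hn
      exact absurd hn (by omega)
    obtain ⟨i, hi⟩ := exists_descent hw
    have hlen := length_sr_mul_of_gt i w hi
    obtain ⟨l, hl1, hl2⟩ := ih (simpleRefl r i * w) (by omega)
    refine ⟨i :: l, ?_, by simp only [List.length_cons, hl2]⟩
    simp only [List.map_cons, List.prod_cons, hl1]
    rw [← mul_assoc, simpleRefl_eq, Equiv.swap_mul_self, one_mul]

lemma length_mul_sr_of_lt (j : Fin (r-1)) (w : Equiv.Perm (Fin r))
    (h : w (pA j) < w (pB j)) :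
    permLength (w * simpleRefl r j) = permLength w + 1 := by
  have key := length_sr_mul_of_lt j w⁻¹ (by simpa using h)
  rw [length_inv] at key
  have hsr : (simpleRefl r j)⁻¹ = simpleRefl r j := by
    rw [simpleRefl_eq]; exact Equiv.swap_inv _ _
  have h3 : permLength (w * simpleRefl r j) = permLength (simpleRefl r j * w⁻¹) := by
    rw [← length_inv (w * simpleRefl r j), mul_inv_rev, hsr]
  rw [h3, key]

lemma length_mul_sr_of_gt (j : Fin (r-1)) (w : Equiv.Perm (Fin r))
    (h : w (pB j) < w (pA j)) :
    permLength w = permLength (w * simpleRefl r j) + 1 := by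
  have key := length_mul_sr_of_lt j (w * simpleRefl r j) (by
    simp only [Equiv.Perm.mul_apply, simpleRefl_eq, Equiv.swap_apply_left,
      Equiv.swap_apply_right]
    exact h)
  have : w * simpleRefl r j * simpleRefl r j = w := by
    rw [mul_assoc, simpleRefl_eq, Equiv.swap_mul_self, mul_one]
  rwa [this] at key

lemma rc_or_gc (j : Fin (r-1)) (w : Equiv.Perm (Fin r)) :
    w (pA j) < w (pB j) ∨ w (pB j) < w (pA j) := by
  rcases lt_trichotomy (w (pA j)) (w (pB j)) with h|h|h
  · exact Or.inl h
  · exact absurd (w.injective h) (pA_ne_pB j)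
  · exact Or.inr h

end Part2


section Part3
variable {r : ℕ} (R : Type) [CommRing R]

abbrev M (R : Type) [CommRing R] (r : ℕ) : Type := Equiv.Perm (Fin r) →₀ R

noncomputable def E (w : Equiv.Perm (Fin r)) : M R r := Finsupp.single w 1

noncomputable def lop (q : R) (i : Fin (r-1)) : M R r →ₗ[R] M R r :=
  Finsupp.linearCombination R (fun w =>
    if w⁻¹ (pA i) < w⁻¹ (pB i) then E R (simpleRefl r i * w)
    else q • E R (simpleRefl r i * w) + (q-1) • E R w)

noncomputable def rop (q : R) (j : Fin (r-1)) : M R r →ₗ[R] M R r :=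
  Finsupp.linearCombination R (fun w =>
    if w (pA j) < w (pB j) then E R (w * simpleRefl r j)
    else q • E R (w * simpleRefl r j) + (q-1) • E R w)

variable {R}

lemma lop_E_of_lt (q : R) (i : Fin (r-1)) (w : Equiv.Perm (Fin r))
    (h : w⁻¹ (pA i) < w⁻¹ (pB i)) : lop R q i (E R w) = E R (simpleRefl r i * w) := by
  simp only [lop, E, Finsupp.linearCombination_single, if_pos h, one_smul]

lemma lop_E_of_gt (q : R) (i : Fin (r-1)) (w : Equiv.Perm (Fin r))
    (h : ¬ w⁻¹ (pA i) < w⁻¹ (pB i)) :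
    lop R q i (E R w) = q • E R (simpleRefl r i * w) + (q-1) • E R w := by
  simp only [lop, E, Finsupp.linearCombination_single, if_neg h, one_smul]

lemma rop_E_of_lt (q : R) (j : Fin (r-1)) (w : Equiv.Perm (Fin r))
    (h : w (pA j) < w (pB j)) : rop R q j (E R w) = E R (w * simpleRefl r j) := by
  simp [rop, E, Finsupp.linearCombination_single, if_pos h]

lemma rop_E_of_gt (q : R) (j : Fin (r-1)) (w : Equiv.Perm (Fin r))
    (h : ¬ w (pA j) < w (pB j)) :
    rop R q j (E R w) = q • E R (w * simpleRefl r j) + (q-1) • E R w := by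
  simp [rop, E, Finsupp.linearCombination_single, if_neg h]

lemma ext_E {f g : M R r →ₗ[R] M R r} (h : ∀ w, f (E R w) = g (E R w)) : f = g := by
  apply Finsupp.lhom_ext
  intro a b
  have : (Finsupp.single a b : M R r) = b • E R a := by
    simp [E, Finsupp.smul_single]
  rw [this, map_smul, map_smul, h]

-- basic perm facts
lemma sr_mul_sr_mul (i : Fin (r-1)) (w : Equiv.Perm (Fin r)) :
    simpleRefl r i * (simpleRefl r i * w) = w := by
  rw [← mul_assoc, simpleRefl_eq, Equiv.swap_mul_self, one_mul]

lemma mul_sr_mul_sr (j : Fin (r-1)) (w : Equiv.Perm (Fin r)) :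
    w * simpleRefl r j * simpleRefl r j = w := by
  rw [mul_assoc, simpleRefl_eq, Equiv.swap_mul_self, mul_one]

lemma lc_sr_mul (i : Fin (r-1)) (w : Equiv.Perm (Fin r)) :
    (simpleRefl r i * w)⁻¹ (pA i) < (simpleRefl r i * w)⁻¹ (pB i) ↔
      ¬ w⁻¹ (pA i) < w⁻¹ (pB i) := by
  simp only [mul_inv_rev, simpleRefl_eq, Equiv.swap_inv, Equiv.Perm.mul_apply,
    Equiv.swap_apply_left, Equiv.swap_apply_right]
  constructor
  · intro h; exact fun h' => absurd (lt_trans h h') (lt_irrefl _)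
  · intro h
    rcases lc_or_gc i w with h'|h'
    · exact absurd h' h
    · exact h'

lemma rc_mul_sr (j : Fin (r-1)) (w : Equiv.Perm (Fin r)) :
    (w * simpleRefl r j) (pA j) < (w * simpleRefl r j) (pB j) ↔
      ¬ w (pA j) < w (pB j) := by
  simp only [Equiv.Perm.mul_apply, simpleRefl_eq, Equiv.swap_apply_left,
    Equiv.swap_apply_right]
  constructor
  · intro h; exact fun h' => absurd (lt_trans h h') (lt_irrefl _)
  · intro h
    rcases rc_or_gc j w with h'|h'
    · exact absurd h' h
    · exact h'

lemma lop_lop (q : R) (i : Fin (r-1)) :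
    lop R q i ∘ₗ lop R q i = q • LinearMap.id + (q-1) • lop R q i := by
  apply ext_E
  intro w
  simp only [LinearMap.comp_apply, LinearMap.add_apply, LinearMap.smul_apply,
    LinearMap.id_apply]
  by_cases h : w⁻¹ (pA i) < w⁻¹ (pB i)
  · rw [lop_E_of_lt q i w h,
      lop_E_of_gt q i _ (fun h' => ((lc_sr_mul i w).1 h') h), sr_mul_sr_mul]
  · rw [lop_E_of_gt q i w h, map_add, map_smul, map_smul,
      lop_E_of_lt q i _ ((lc_sr_mul i w).2 h), lop_E_of_gt q i w h, sr_mul_sr_mul]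

end Part3


section Part4
variable {r : ℕ} {R : Type} [CommRing R]

lemma swap_adj_lt_iff {a b : Fin r} (hab : (b:ℕ) = a + 1) {x y : Fin r} (hne : x ≠ y)
    (h1 : ¬(x = a ∧ y = b)) (h2 : ¬(x = b ∧ y = a)) :
    Equiv.swap a b x < Equiv.swap a b y ↔ x < y := by
  rcases lt_or_gt_of_ne hne with h|h
  · simp only [h, iff_true]
    exact swap_adj_lt' hab h h1
  · have := swap_adj_lt' hab h (fun hc => h2 ⟨hc.2, hc.1⟩)
    constructor
    · intro h'; exact absurd (lt_trans this h') (lt_irrefl _)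
    · intro h'; exact absurd (lt_trans h h') (lt_irrefl _)

/-- the coupled case: `w` matches the positions of `s_j` to the values of `s_i` -/
def Cp (i j : Fin (r-1)) (w : Equiv.Perm (Fin r)) : Prop :=
  (w (pA j) = pA i ∧ w (pB j) = pB i) ∨ (w (pA j) = pB i ∧ w (pB j) = pA i)

lemma lc_mul_sr_iff {i j : Fin (r-1)} {w : Equiv.Perm (Fin r)} (hcp : ¬ Cp i j w) :
    (w * simpleRefl r j)⁻¹ (pA i) < (w * simpleRefl r j)⁻¹ (pB i) ↔
      w⁻¹ (pA i) < w⁻¹ (pB i) := by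
  have h1 : ∀ x : Fin r, (w * simpleRefl r j)⁻¹ x = Equiv.swap (pA j) (pB j) (w⁻¹ x) := by
    intro x
    simp [mul_inv_rev, simpleRefl_eq, Equiv.swap_inv]
  rw [h1, h1]
  apply swap_adj_lt_iff (pB_val j)
  · exact fun hc => pA_ne_pB i (w⁻¹.injective hc)
  · rintro ⟨ha, hb⟩
    exact hcp (Or.inl ⟨by rw [← ha]; simp, by rw [← hb]; simp⟩)
  · rintro ⟨ha, hb⟩
    exact hcp (Or.inr ⟨by rw [← hb]; simp, by rw [← ha]; simp⟩)

lemma rc_sr_mul_iff {i j : Fin (r-1)} {w : Equiv.Perm (Fin r)} (hcp : ¬ Cp i j w) :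
    (simpleRefl r i * w) (pA j) < (simpleRefl r i * w) (pB j) ↔
      w (pA j) < w (pB j) := by
  simp only [Equiv.Perm.mul_apply, simpleRefl_eq]
  apply swap_adj_lt_iff (pB_val i)
  · exact fun hc => pA_ne_pB j (w.injective hc)
  · exact fun hc => hcp (Or.inl hc)
  · exact fun hc => hcp (Or.inr hc)

lemma cp_comm {i j : Fin (r-1)} {w : Equiv.Perm (Fin r)} (hcp : Cp i j w) :
    simpleRefl r i * w = w * simpleRefl r j := by
  have hAmem : w⁻¹ (pA i) = pA j ∨ w⁻¹ (pA i) = pB j := by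
    rcases hcp with ⟨h1, h2⟩|⟨h1, h2⟩
    · left; rw [← h1]; simp
    · right; rw [← h2]; simp
  have hBmem : w⁻¹ (pB i) = pA j ∨ w⁻¹ (pB i) = pB j := by
    rcases hcp with ⟨h1, h2⟩|⟨h1, h2⟩
    · right; rw [← h2]; simp
    · left; rw [← h1]; simp
  apply Equiv.ext
  intro x
  simp only [Equiv.Perm.mul_apply, simpleRefl_eq]
  rcases eq_or_ne x (pA j) with rfl|hxa
  · rw [Equiv.swap_apply_left]
    rcases hcp with ⟨h1, h2⟩|⟨h1, h2⟩
    · rw [h1, h2, Equiv.swap_apply_left]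
    · rw [h1, h2, Equiv.swap_apply_right]
  · rcases eq_or_ne x (pB j) with rfl|hxb
    · rw [Equiv.swap_apply_right]
      rcases hcp with ⟨h1, h2⟩|⟨h1, h2⟩
      · rw [h1, h2, Equiv.swap_apply_right]
      · rw [h1, h2, Equiv.swap_apply_left]
    · rw [Equiv.swap_apply_of_ne_of_ne hxa hxb]
      apply Equiv.swap_apply_of_ne_of_ne
      · intro hc
        have : x = w⁻¹ (pA i) := by rw [← hc]; simp
        rcases hAmem with h|h <;> rw [h] at this
        · exact hxa this
        · exact hxb this
      · intro hc
        have : x = w⁻¹ (pB i) := by rw [← hc]; simp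
        rcases hBmem with h|h <;> rw [h] at this
        · exact hxa this
        · exact hxb this

lemma pA_lt_pB (i : Fin (r-1)) : (pA i : Fin r) < pB i := by
  simp [pA, pB, Fin.lt_def]

lemma cp_lc_iff_rc {i j : Fin (r-1)} {w : Equiv.Perm (Fin r)} (hcp : Cp i j w) :
    (w⁻¹ (pA i) < w⁻¹ (pB i) ↔ w (pA j) < w (pB j)) := by
  rcases hcp with ⟨h1, h2⟩|⟨h1, h2⟩
  · have e1 : w⁻¹ (pA i) = pA j := by rw [← h1]; simp
    have e2 : w⁻¹ (pB i) = pB j := by rw [← h2]; simp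
    rw [e1, e2, h1, h2]
    simp [pA_lt_pB]
  · have e1 : w⁻¹ (pA i) = pB j := by rw [← h2]; simp
    have e2 : w⁻¹ (pB i) = pA j := by rw [← h1]; simp
    rw [e1, e2, h1, h2]
    have h3 := pA_lt_pB i
    have h4 := pA_lt_pB j
    constructor
    · intro h'; exact absurd (lt_trans h' h4) (lt_irrefl _)
    · intro h'; exact absurd (lt_trans h' h3) (lt_irrefl _)

lemma lop_rop_comm (q : R) (i j : Fin (r-1)) :
    lop R q i ∘ₗ rop R q j = rop R q j ∘ₗ lop R q i := by
  apply ext_E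
  intro w
  simp only [LinearMap.comp_apply]
  by_cases hcp : Cp i j w
  · -- coupled case
    have heq := cp_comm hcp
    have hLR := cp_lc_iff_rc hcp
    have e1 : simpleRefl r i * (w * simpleRefl r j) = w := by
      rw [← heq, sr_mul_sr_mul]
    have e2 : w * simpleRefl r j * simpleRefl r j = w := mul_sr_mul_sr j w
    by_cases hl : w⁻¹ (pA i) < w⁻¹ (pB i)
    · have hr : w (pA j) < w (pB j) := hLR.1 hl
      rw [rop_E_of_lt q j w hr, lop_E_of_lt q i w hl,
        lop_E_of_gt q i (w * simpleRefl r j) (by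
          rw [← heq, lc_sr_mul]; exact fun h' => h' hl),
        rop_E_of_gt q j (simpleRefl r i * w) (by
          rw [heq, rc_mul_sr]; exact fun h' => h' hr), e1, heq, e2]
    · have hr : ¬ w (pA j) < w (pB j) := fun h' => hl (hLR.2 h')
      rw [rop_E_of_gt q j w hr, lop_E_of_gt q i w hl, map_add, map_smul, map_smul,
        map_add, map_smul, map_smul,
        lop_E_of_lt q i (w * simpleRefl r j) (by
          rw [← heq, lc_sr_mul]; exact hl),
        rop_E_of_lt q j (simpleRefl r i * w) (by
          rw [heq, rc_mul_sr]; exact hr),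
        lop_E_of_gt q i w hl, rop_E_of_gt q j w hr, e1, heq, e2]
  · -- uncoupled case
    have hLiff := lc_mul_sr_iff hcp
    have hRiff := rc_sr_mul_iff hcp
    have e3 : simpleRefl r i * (w * simpleRefl r j) = simpleRefl r i * w * simpleRefl r j :=
      (mul_assoc _ _ _).symm
    by_cases hl : w⁻¹ (pA i) < w⁻¹ (pB i) <;> by_cases hr : w (pA j) < w (pB j)
    · rw [rop_E_of_lt q j w hr, lop_E_of_lt q i w hl,
        lop_E_of_lt q i (w * simpleRefl r j) (hLiff.2 hl),
        rop_E_of_lt q j (simpleRefl r i * w) (hRiff.2 hr), e3]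
    · rw [rop_E_of_gt q j w hr, lop_E_of_lt q i w hl, map_add, map_smul, map_smul,
        lop_E_of_lt q i (w * simpleRefl r j) (hLiff.2 hl),
        lop_E_of_lt q i w hl,
        rop_E_of_gt q j (simpleRefl r i * w) (fun h' => hr (hRiff.1 h')), e3]
    · rw [rop_E_of_lt q j w hr, lop_E_of_gt q i w hl, map_add, map_smul, map_smul,
        lop_E_of_gt q i (w * simpleRefl r j) (fun h' => hl (hLiff.1 h')),
        rop_E_of_lt q j (simpleRefl r i * w) (hRiff.2 hr),
        rop_E_of_lt q j w hr, e3]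
    · rw [rop_E_of_gt q j w hr, lop_E_of_gt q i w hl, map_add, map_smul, map_smul,
        map_add, map_smul, map_smul,
        lop_E_of_gt q i (w * simpleRefl r j) (fun h' => hl (hLiff.1 h')),
        lop_E_of_gt q i w hl,
        rop_E_of_gt q j (simpleRefl r i * w) (fun h' => hr (hRiff.1 h')),
        rop_E_of_gt q j w hr, e3]
      module

end Part4


section Part5
variable {r : ℕ} {R : Type} [CommRing R]

lemma length_word_le (l : List (Fin (r-1))) :
    permLength ((l.map (simpleRefl r)).prod : Equiv.Perm (Fin r)) ≤ l.length := by
  induction l with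
  | nil => simp [length_one]
  | cons i l ih =>
    simp only [List.map_cons, List.prod_cons, List.length_cons]
    rcases lc_or_gc i ((l.map (simpleRefl r)).prod) with h|h
    · rw [length_sr_mul_of_lt i _ h]; omega
    · have := length_sr_mul_of_gt i _ h; omega

lemma reduced_cons {i : Fin (r-1)} {l : List (Fin (r-1))}
    (h : permLength (((i :: l).map (simpleRefl r)).prod : Equiv.Perm (Fin r)) = l.length + 1) :
    permLength ((l.map (simpleRefl r)).prod : Equiv.Perm (Fin r)) = l.length ∧
    ((l.map (simpleRefl r)).prod : Equiv.Perm (Fin r))⁻¹ (pA i) <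
      ((l.map (simpleRefl r)).prod : Equiv.Perm (Fin r))⁻¹ (pB i) := by
  simp only [List.map_cons, List.prod_cons] at h
  have hle := length_word_le l
  rcases lc_or_gc i ((l.map (simpleRefl r)).prod) with h'|h'
  · have := length_sr_mul_of_lt i _ h'
    exact ⟨by omega, h'⟩
  · have := length_sr_mul_of_gt i _ h'
    omega

lemma reduced_concat {j : Fin (r-1)} {l : List (Fin (r-1))}
    (h : permLength (((l ++ [j]).map (simpleRefl r)).prod : Equiv.Perm (Fin r)) = l.length + 1) :
    permLength ((l.map (simpleRefl r)).prod : Equiv.Perm (Fin r)) = l.length ∧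
    ((l.map (simpleRefl r)).prod : Equiv.Perm (Fin r)) (pA j) <
      ((l.map (simpleRefl r)).prod : Equiv.Perm (Fin r)) (pB j) := by
  simp only [List.map_append, List.prod_append, List.map_cons, List.prod_cons,
    List.map_nil, List.prod_nil, mul_one] at h
  have hle := length_word_le l
  rcases rc_or_gc j ((l.map (simpleRefl r)).prod) with h'|h'
  · have := length_mul_sr_of_lt j _ h'
    exact ⟨by omega, h'⟩
  · have := length_mul_sr_of_gt j _ h'
    omega

lemma lword (q : R) (l : List (Fin (r-1)))
    (h : permLength ((l.map (simpleRefl r)).prod : Equiv.Perm (Fin r)) = l.length) :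
    ((l.map (lop R q)).prod) (E R ((1 : Equiv.Perm (Fin r)))) =
      E R ((l.map (simpleRefl r)).prod) := by
  induction l with
  | nil => simp
  | cons i l ih =>
    have hred := reduced_cons (by simpa using h)
    simp only [List.map_cons, List.prod_cons, Module.End.mul_apply]
    rw [ih hred.1, lop_E_of_lt q i _ hred.2]

/-- applying right operators along a word -/
noncomputable def rfold (q : R) (l : List (Fin (r-1))) (m : M R r) : M R r :=
  l.foldl (fun m' j => rop R q j m') m

lemma rfold_append (q : R) (l₁ l₂ : List (Fin (r-1))) (m : M R r) :
    rfold q (l₁ ++ l₂) m = rfold q l₂ (rfold q l₁ m) := by simp [rfold, List.foldl_append]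

lemma rword (q : R) (l : List (Fin (r-1)))
    (h : permLength ((l.map (simpleRefl r)).prod : Equiv.Perm (Fin r)) = l.length) :
    rfold q l (E R (1 : Equiv.Perm (Fin r))) = E R ((l.map (simpleRefl r)).prod) := by
  induction l using List.reverseRecOn with
  | nil => simp [rfold]
  | append_singleton l j ih =>
    have hred := reduced_concat (by simpa using h)
    rw [rfold_append, ih hred.1]
    simp only [rfold, List.foldl_cons, List.foldl_nil]
    rw [rop_E_of_lt q j _ hred.2]
    simp

lemma commute_rop_zero (q : R) {f : M R r →ₗ[R] M R r}
    (hc : ∀ j, f ∘ₗ rop R q j = rop R q j ∘ₗ f)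
    (h1 : f (E R (1 : Equiv.Perm (Fin r))) = 0) : f = 0 := by
  have key : ∀ (l : List (Fin (r-1))) (m : M R r), f (rfold q l m) = rfold q l (f m) := by
    intro l
    induction l with
    | nil => intro m; simp [rfold]
    | cons j l ih =>
      intro m
      simp only [rfold, List.foldl_cons]
      have := ih (rop R q j m)
      simp only [rfold] at this
      rw [this]
      congr 1
      exact DFunLike.congr_fun (hc j) m
  have hz : ∀ (l : List (Fin (r-1))), rfold q l (0 : M R r) = 0 := by
    intro l
    induction l with
    | nil => simp [rfold]
    | cons j l ih =>
      simp only [rfold, List.foldl_cons, map_zero]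
      simpa [rfold] using ih
  apply ext_E
  intro w
  obtain ⟨l, hl1, hl2⟩ := exists_reduced_word w
  have hred : permLength ((l.map (simpleRefl r)).prod : Equiv.Perm (Fin r)) = l.length := by
    rw [hl1, ← hl2]
  have := rword (R := R) q l hred
  rw [hl1] at this
  rw [LinearMap.zero_apply, ← this, key, h1, hz]

-- simple perm/word computations
lemma sr_fix_far {i j : Fin (r-1)} (h : (i:ℕ) + 1 < (j:ℕ) ∨ (j:ℕ) + 1 < (i:ℕ)) :
    simpleRefl r j (pA i) = pA i ∧ simpleRefl r j (pB i) = pB i := by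
  rw [simpleRefl_eq]
  constructor <;>
    exact Equiv.swap_apply_of_ne_of_ne (by simp [pA, pB, Fin.ext_iff]; omega)
      (by simp [pA, pB, Fin.ext_iff]; omega)

lemma length_sr (i : Fin (r-1)) : permLength (simpleRefl r i) = 1 := by
  have := length_sr_mul_of_lt i 1 (by simpa using pA_lt_pB i)
  simpa [length_one] using this

lemma length_sr_mul_sr_far {i j : Fin (r-1)} (h : (i:ℕ) + 1 < (j:ℕ) ∨ (j:ℕ) + 1 < (i:ℕ)) :
    permLength (simpleRefl r i * simpleRefl r j) = 2 := by
  have hsr : (simpleRefl r j)⁻¹ = simpleRefl r j := by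
    rw [simpleRefl_eq]; exact Equiv.swap_inv _ _
  have hfix := sr_fix_far (r := r) h
  have := length_sr_mul_of_lt i (simpleRefl r j) (by
    rw [hsr, hfix.1, hfix.2]; exact pA_lt_pB i)
  rw [this, length_sr]

lemma sr_comm_far {i j : Fin (r-1)} (h : (i:ℕ) + 1 < (j:ℕ)) :
    simpleRefl r i * simpleRefl r j = simpleRefl r j * simpleRefl r i := by
  apply Equiv.Perm.Disjoint.commute
  intro x
  rcases eq_or_ne x (pA i) with rfl|h1
  · right; exact (sr_fix_far (Or.inl h)).1
  rcases eq_or_ne x (pB i) with rfl|h2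
  · right; exact (sr_fix_far (Or.inl h)).2
  · left; rw [simpleRefl_eq]; exact Equiv.swap_apply_of_ne_of_ne h1 h2

end Part5


section Part6
variable {r : ℕ} {R : Type} [CommRing R]

lemma sr_inv (i : Fin (r-1)) : (simpleRefl r i)⁻¹ = simpleRefl r i := by
  rw [simpleRefl_eq]; exact Equiv.swap_inv _ _

lemma pAj_eq_pBi {i j : Fin (r-1)} (h : (j:ℕ) = (i:ℕ)+1) : (pA j : Fin r) = pB i :=
  Fin.ext (by simp [pA, pB]; omega)

@[simp] lemma pA_val' (i : Fin (r-1)) : ((pA i : Fin r) : ℕ) = (i:ℕ) := rfl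
@[simp] lemma pB_val' (i : Fin (r-1)) : ((pB i : Fin r) : ℕ) = (i:ℕ)+1 := rfl

section Braid
set_option linter.unusedSectionVars false
variable {i j : Fin (r-1)} (h : (j:ℕ) = (i:ℕ)+1)

lemma sr_i_pA : simpleRefl r i (pA i) = pB i := by
  rw [simpleRefl_eq]; exact Equiv.swap_apply_left _ _

lemma sr_i_pB : simpleRefl r i (pB i) = pA i := by
  rw [simpleRefl_eq]; exact Equiv.swap_apply_right _ _

include h

lemma sr_i_pBj : simpleRefl r i (pB j) = pB j := by
  rw [simpleRefl_eq]
  exact Equiv.swap_apply_of_ne_of_ne (by rw [Ne, Fin.ext_iff]; simp; omega)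
    (by rw [Ne, Fin.ext_iff]; simp; omega)

lemma sr_j_pBi : simpleRefl r j (pB i) = pB j := by
  rw [simpleRefl_eq, ← pAj_eq_pBi h]; exact Equiv.swap_apply_left _ _

lemma sr_j_pBj : simpleRefl r j (pB j) = pB i := by
  rw [simpleRefl_eq, ← pAj_eq_pBi h]; exact Equiv.swap_apply_right _ _

lemma sr_j_pAi : simpleRefl r j (pA i) = pA i := by
  rw [simpleRefl_eq]
  exact Equiv.swap_apply_of_ne_of_ne (by rw [Ne, Fin.ext_iff]; simp; omega)
    (by rw [Ne, Fin.ext_iff]; simp; omega)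

lemma sr_braid :
    simpleRefl r i * simpleRefl r j * simpleRefl r i
      = simpleRefl r j * simpleRefl r i * simpleRefl r j := by
  have hAB : (pA i : Fin r) ≠ pB i := pA_ne_pB i
  have hAC : (pA i : Fin r) ≠ pB j := by rw [Ne, Fin.ext_iff]; simp; omega
  have hCB : (pB j : Fin r) ≠ pB i := by rw [Ne, Fin.ext_iff]; simp; omega
  have hCA : (pB j : Fin r) ≠ pA i := hAC.symm
  have eL := Equiv.swap_mul_swap_mul_swap hCB hCA
  rw [Equiv.swap_comm (pB i) (pA i), Equiv.swap_comm (pB j) (pB i)] at eL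
  have eR := Equiv.swap_mul_swap_mul_swap hAB hAC
  simp only [simpleRefl_eq, pAj_eq_pBi h]
  rw [eL, eR]
  exact Equiv.swap_comm _ _

lemma length_iji : permLength
    (simpleRefl r i * simpleRefl r j * simpleRefl r i : Equiv.Perm (Fin r)) = 3 := by
  have l2 : permLength (simpleRefl r j * simpleRefl r i : Equiv.Perm (Fin r)) = 2 := by
    have := length_sr_mul_of_lt j (simpleRefl r i) (by
      rw [sr_inv, pAj_eq_pBi h, sr_i_pB, sr_i_pBj h, Fin.lt_def]
      simp; omega)
    rw [this, length_sr]
  have l3 : permLength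
      (simpleRefl r i * (simpleRefl r j * simpleRefl r i) : Equiv.Perm (Fin r)) = 3 := by
    have := length_sr_mul_of_lt i (simpleRefl r j * simpleRefl r i) (by
      rw [mul_inv_rev, sr_inv, sr_inv]
      simp only [Equiv.Perm.mul_apply]
      rw [sr_j_pAi h, sr_i_pA, sr_j_pBi h, sr_i_pBj h, Fin.lt_def]
      simp; omega)
    rw [this, l2]
  rw [mul_assoc]
  exact l3

lemma length_jij : permLength
    (simpleRefl r j * simpleRefl r i * simpleRefl r j : Equiv.Perm (Fin r)) = 3 := by
  have l2 : permLength (simpleRefl r i * simpleRefl r j : Equiv.Perm (Fin r)) = 2 := by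
    have := length_sr_mul_of_lt i (simpleRefl r j) (by
      rw [sr_inv, sr_j_pAi h, sr_j_pBi h, Fin.lt_def]
      simp; omega)
    rw [this, length_sr]
  have l3 : permLength
      (simpleRefl r j * (simpleRefl r i * simpleRefl r j) : Equiv.Perm (Fin r)) = 3 := by
    have := length_sr_mul_of_lt j (simpleRefl r i * simpleRefl r j) (by
      rw [mul_inv_rev, sr_inv, sr_inv]
      simp only [Equiv.Perm.mul_apply]
      rw [pAj_eq_pBi h, sr_i_pB, sr_j_pAi h, sr_i_pBj h, sr_j_pBj h]
      exact pA_lt_pB i)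
    rw [this, l2]
  rw [mul_assoc]
  exact l3

end Braid

lemma prod_lop_comm_rop (q : R) (l : List (Fin (r-1))) (j : Fin (r-1)) :
    ((l.map (lop R q)).prod) ∘ₗ rop R q j = rop R q j ∘ₗ ((l.map (lop R q)).prod) := by
  induction l with
  | nil => simp [Module.End.one_eq_id]
  | cons i l ih =>
    simp only [List.map_cons, List.prod_cons, Module.End.mul_eq_comp, LinearMap.comp_assoc, ih]
    rw [← LinearMap.comp_assoc, lop_rop_comm, LinearMap.comp_assoc]

lemma lword_eq (q : R) (l₁ l₂ : List (Fin (r-1)))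
    (h₁ : permLength ((l₁.map (simpleRefl r)).prod : Equiv.Perm (Fin r)) = l₁.length)
    (h₂ : permLength ((l₂.map (simpleRefl r)).prod : Equiv.Perm (Fin r)) = l₂.length)
    (hp : ((l₁.map (simpleRefl r)).prod : Equiv.Perm (Fin r)) = (l₂.map (simpleRefl r)).prod) :
    ((l₁.map (lop R q)).prod : Module.End R (M R r)) = (l₂.map (lop R q)).prod := by
  rw [← sub_eq_zero]
  have := commute_rop_zero q
    (f := ((l₁.map (lop R q)).prod : Module.End R (M R r)) - (l₂.map (lop R q)).prod)
    (fun j => by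
      rw [LinearMap.sub_comp, LinearMap.comp_sub, prod_lop_comm_rop, prod_lop_comm_rop])
    (by
      rw [LinearMap.sub_apply, lword q l₁ h₁, lword q l₂ h₂, hp, sub_self])
  exact this

variable (R) in
noncomputable def lam (q : R) (r : ℕ) :
    FreeAlgebra R (Fin (r-1)) →ₐ[R] Module.End R (M R r) :=
  FreeAlgebra.lift R (fun i => lop R q i)

lemma lam_rel (q : R) : ∀ ⦃x y : FreeAlgebra R (Fin (r-1))⦄,
    HeckeRel R q (r-1) x y → lam R q r x = lam R q r y := by
  intro x y hxy
  induction hxy with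
  | quad i =>
    simp only [lam, map_mul, map_sub, map_add, map_one, map_zero,
      FreeAlgebra.lift_ι_apply, AlgHom.commutes]
    apply ext_E
    intro w
    simp only [Module.End.mul_apply, LinearMap.sub_apply, LinearMap.add_apply,
      Module.End.one_apply, LinearMap.zero_apply, Module.algebraMap_end_eq_smul_id,
      LinearMap.smul_apply, LinearMap.id_apply, map_add]
    by_cases hl : w⁻¹ (pA i) < w⁻¹ (pB i)
    · rw [lop_E_of_lt q i w hl,
        lop_E_of_gt q i _ (fun h' => ((lc_sr_mul i w).1 h') hl), sr_mul_sr_mul]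
      module
    · rw [lop_E_of_gt q i w hl, map_add, map_smul, map_smul,
        lop_E_of_lt q i _ ((lc_sr_mul i w).2 hl), lop_E_of_gt q i w hl, sr_mul_sr_mul]
      module
  | comm i j hij =>
    simp only [lam, map_mul, FreeAlgebra.lift_ι_apply]
    have key := lword_eq q [i, j] [j, i] (by
        simpa using length_sr_mul_sr_far (Or.inl hij)) (by
        simpa using length_sr_mul_sr_far (Or.inr hij)) (by
        simpa using sr_comm_far hij)
    simpa using key
  | braid i j hij =>
    simp only [lam, map_mul, FreeAlgebra.lift_ι_apply]
    have key := lword_eq q [i, j, i] [j, i, j] (by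
        simpa [← mul_assoc] using length_iji hij) (by
        simpa [← mul_assoc] using length_jij hij) (by
        simpa [← mul_assoc] using sr_braid hij)
    simpa [← mul_assoc] using key

end Part6


section Part7
variable {r : ℕ} {R : Type} [CommRing R]

/-- the permutation of a word -/
abbrev wp (l : List (Fin (r-1))) : Equiv.Perm (Fin r) := (l.map (simpleRefl r)).prod

/-- the Hecke monomial of a word -/
noncomputable abbrev Tp (q : R) (l : List (Fin (r-1))) : Hecke R q r :=
  (l.map (Tgen R q r)).prod

/-- a word is reduced -/
abbrev red (l : List (Fin (r-1))) : Prop :=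
  permLength (wp l : Equiv.Perm (Fin r)) = l.length

lemma wp_cons (i : Fin (r-1)) (l : List (Fin (r-1))) :
    (wp (i :: l) : Equiv.Perm (Fin r)) = simpleRefl r i * wp l := by
  simp [wp]

lemma Tp_cons (q : R) (i : Fin (r-1)) (l : List (Fin (r-1))) :
    (Tp q (i :: l) : Hecke R q r) = Tgen R q r i * Tp q l := by
  simp [Tp]

lemma sr_comm_far' {i j : Fin (r-1)} (h : (i:ℕ)+1 < (j:ℕ) ∨ (j:ℕ)+1 < (i:ℕ)) :
    simpleRefl r i * simpleRefl r j = simpleRefl r j * simpleRefl r i := by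
  rcases h with h|h
  · exact sr_comm_far h
  · exact (sr_comm_far h).symm

lemma Tgen_comm' (q : R) {i j : Fin (r-1)} (h : (i:ℕ)+1 < (j:ℕ) ∨ (j:ℕ)+1 < (i:ℕ)) :
    Tgen R q r i * Tgen R q r j = Tgen R q r j * Tgen R q r i := by
  rcases h with h|h
  · have h0 := RingQuot.mkAlgHom_rel R (HeckeRel.comm (R := R) (q := q) i j h)
    rw [map_mul, map_mul] at h0
    exact h0
  · have h0 := RingQuot.mkAlgHom_rel R (HeckeRel.comm (R := R) (q := q) j i h)
    rw [map_mul, map_mul] at h0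
    exact h0.symm

lemma Tgen_braid (q : R) {i j : Fin (r-1)} (h : (j:ℕ) = (i:ℕ)+1) :
    Tgen R q r i * Tgen R q r j * Tgen R q r i
      = Tgen R q r j * Tgen R q r i * Tgen R q r j := by
  have h0 := RingQuot.mkAlgHom_rel R (HeckeRel.braid (R := R) (q := q) i j h)
  rw [map_mul, map_mul, map_mul, map_mul] at h0
  exact h0

lemma Tgen_sq (q : R) (i : Fin (r-1)) :
    Tgen R q r i * Tgen R q r i
      = q • Tgen R q r i + q • (1 : Hecke R q r) - Tgen R q r i := by
  have h0 := RingQuot.mkAlgHom_rel R (HeckeRel.quad (R := R) (q := q) i)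
  rw [map_mul, map_sub, map_add, map_one, map_zero, AlgHom.commutes] at h0
  rw [sub_mul, mul_add, mul_add, mul_one, mul_one] at h0
  have h1 := sub_eq_zero.mp h0
  rw [← Algebra.smul_def, Algebra.algebraMap_eq_smul_one] at h1
  rw [eq_sub_iff_add_eq]
  exact h1

lemma sr_fix_far' {i j : Fin (r-1)} (h : (i:ℕ)+1 < (j:ℕ) ∨ (j:ℕ)+1 < (i:ℕ)) :
    simpleRefl r i (pA j) = pA j ∧ simpleRefl r i (pB j) = pB j := by
  apply sr_fix_far
  tauto

lemma inv_sr_mul_apply (i : Fin (r-1)) (w : Equiv.Perm (Fin r)) (x : Fin r) :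
    (simpleRefl r i * w)⁻¹ x = w⁻¹ (simpleRefl r i x) := by
  rw [mul_inv_rev, sr_inv]
  rfl

lemma lc_far {i j : Fin (r-1)} (h : (i:ℕ)+1 < (j:ℕ) ∨ (j:ℕ)+1 < (i:ℕ))
    (w : Equiv.Perm (Fin r)) :
    ((simpleRefl r i * w)⁻¹ (pA j) < (simpleRefl r i * w)⁻¹ (pB j)) ↔
      (w⁻¹ (pA j) < w⁻¹ (pB j)) := by
  have hfix := sr_fix_far' (r := r) h
  rw [inv_sr_mul_apply, inv_sr_mul_apply, hfix.1, hfix.2]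

lemma sr_braid_apply {i j : Fin (r-1)} (h : (j:ℕ) = (i:ℕ)+1) (x : Equiv.Perm (Fin r)) :
    simpleRefl r i * (simpleRefl r j * (simpleRefl r i * x))
      = simpleRefl r j * (simpleRefl r i * (simpleRefl r j * x)) := by
  rw [← mul_assoc, ← mul_assoc, ← mul_assoc, ← mul_assoc, sr_braid h]

/-- Matsumoto-type statement: two reduced words for the same permutation give the same
Hecke monomial. -/
lemma matsumoto (q : R) (n : ℕ) : ∀ (l₁ l₂ : List (Fin (r-1))),
    l₁.length = n → (wp l₁ : Equiv.Perm (Fin r)) = wp l₂ →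
    red l₁ → red l₂ → (Tp q l₁ : Hecke R q r) = Tp q l₂ := by
  induction n using Nat.strong_induction_on with
  | _ n ih =>
  -- helper for the "far" commuting case
  have farcase : ∀ (i j : Fin (r-1)) (α β : List (Fin (r-1))),
      ((i:ℕ)+1 < (j:ℕ) ∨ (j:ℕ)+1 < (i:ℕ)) →
      (i::α).length = n → (wp (i::α) : Equiv.Perm (Fin r)) = wp (j::β) →
      red (i::α) → red (j::β) → (Tp q (i::α) : Hecke R q r) = Tp q (j::β) := by
    intro i j α β hfar hlen hp h₁ h₂
    have hd₁ := reduced_cons (i := i) (l := α) (by simpa [red, wp] using h₁)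
    have hd₂ := reduced_cons (i := j) (l := β) (by simpa [red, wp] using h₂)
    have hd₁' : (wp α : Equiv.Perm (Fin r))⁻¹ (pA i) < (wp α)⁻¹ (pB i) := hd₁.2
    have hd₂' : (wp β : Equiv.Perm (Fin r))⁻¹ (pA j) < (wp β)⁻¹ (pB j) := hd₂.2
    have hlα : permLength (wp α : Equiv.Perm (Fin r)) = α.length := hd₁.1
    have hlβ : permLength (wp β : Equiv.Perm (Fin r)) = β.length := hd₂.1
    have hAeq : (wp α : Equiv.Perm (Fin r)) = simpleRefl r i * wp (i::α) := by
      rw [wp_cons, sr_mul_sr_mul]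
    have hBeq : (wp β : Equiv.Perm (Fin r)) = simpleRefl r j * wp (i::α) := by
      rw [hp, wp_cons, sr_mul_sr_mul]
    -- descent of j at w
    have hNj : ¬ ((wp (i::α) : Equiv.Perm (Fin r))⁻¹ (pA j) < (wp (i::α))⁻¹ (pB j)) := by
      rw [hBeq] at hd₂'
      exact (lc_sr_mul j (wp (i::α))).1 hd₂'
    -- descent of j at wp α
    have hdj : (wp α : Equiv.Perm (Fin r))⁻¹ (pB j) < (wp α)⁻¹ (pA j) := by
      rcases lc_or_gc j (wp α) with hc|hc
      · exfalso
        apply hNj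
        rw [hAeq] at hc
        rwa [lc_far hfar (wp (i::α))] at hc
      · exact hc
    -- lengths
    have hlv := length_sr_mul_of_gt j (wp α) hdj
    obtain ⟨γ, hγp, hγl⟩ := exists_reduced_word (simpleRefl r j * (wp α : Equiv.Perm (Fin r)))
    have hγp' : (wp γ : Equiv.Perm (Fin r)) = simpleRefl r j * wp α := hγp
    have hγl' : γ.length = permLength (simpleRefl r j * (wp α : Equiv.Perm (Fin r))) := hγl
    have hjγ : (wp (j::γ) : Equiv.Perm (Fin r)) = wp α := by
      rw [wp_cons, hγp', sr_mul_sr_mul]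
    have hredjγ : red (j::γ) := by
      show permLength (wp (j::γ) : Equiv.Perm (Fin r)) = γ.length + 1
      rw [hjγ, hlα]
      omega
    have hIH₁ : (Tp q α : Hecke R q r) = Tp q (j::γ) := by
      apply ih α.length (by simp at hlen; omega) α (j::γ) rfl hjγ.symm hd₁.1 hredjγ
    have hiγ : (wp (i::γ) : Equiv.Perm (Fin r)) = wp β := by
      rw [wp_cons, hγp', hBeq, hAeq, ← mul_assoc, ← mul_assoc, sr_comm_far' hfar,
        mul_assoc, mul_assoc, sr_mul_sr_mul]
    have hrediγ : red (i::γ) := by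
      show permLength (wp (i::γ) : Equiv.Perm (Fin r)) = γ.length + 1
      rw [hiγ, hlβ]
      have hlen2 : permLength (wp (i::α) : Equiv.Perm (Fin r)) = β.length + 1 := by
        rw [hp]
        simpa [red, wp] using h₂
      have hlen1 : permLength (wp (i::α) : Equiv.Perm (Fin r)) = α.length + 1 := by
        simpa [red, wp] using h₁
      omega
    have hIH₂ : (Tp q (i::γ) : Hecke R q r) = Tp q β := by
      apply ih (γ.length + 1) ?_ (i::γ) β (by simp) hiγ hrediγ hd₂.1
      have hlen1 : permLength (wp (i::α) : Equiv.Perm (Fin r)) = α.length + 1 := by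
        simpa [red, wp] using h₁
      simp at hlen
      omega
    rw [Tp_cons, hIH₁, Tp_cons, Tp_cons, ← mul_assoc, Tgen_comm' q hfar, mul_assoc,
      ← Tp_cons, hIH₂, ← Tp_cons]
  -- helper for the adjacent braid case
  have adjcase : ∀ (i j : Fin (r-1)) (α β : List (Fin (r-1))),
      ((j:ℕ) = (i:ℕ)+1) →
      (i::α).length = n → (wp (i::α) : Equiv.Perm (Fin r)) = wp (j::β) →
      red (i::α) → red (j::β) → (Tp q (i::α) : Hecke R q r) = Tp q (j::β) := by
    intro i j α β hadj hlen hp h₁ h₂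
    have hd₁ := reduced_cons (i := i) (l := α) (by simpa [red, wp] using h₁)
    have hd₂ := reduced_cons (i := j) (l := β) (by simpa [red, wp] using h₂)
    have hd₁' : (wp α : Equiv.Perm (Fin r))⁻¹ (pA i) < (wp α)⁻¹ (pB i) := hd₁.2
    have hd₂' : (wp β : Equiv.Perm (Fin r))⁻¹ (pA j) < (wp β)⁻¹ (pB j) := hd₂.2
    have hlα : permLength (wp α : Equiv.Perm (Fin r)) = α.length := hd₁.1
    have hlβ : permLength (wp β : Equiv.Perm (Fin r)) = β.length := hd₂.1
    have hAeq : (wp α : Equiv.Perm (Fin r)) = simpleRefl r i * wp (i::α) := by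
      rw [wp_cons, sr_mul_sr_mul]
    have hBeq : (wp β : Equiv.Perm (Fin r)) = simpleRefl r j * wp (i::α) := by
      rw [hp, wp_cons, sr_mul_sr_mul]
    -- w has descents at i and j
    have hNi : ¬ ((wp (i::α) : Equiv.Perm (Fin r))⁻¹ (pA i) < (wp (i::α))⁻¹ (pB i)) := by
      rw [hAeq] at hd₁'
      exact (lc_sr_mul i (wp (i::α))).1 hd₁'
    have hNj : ¬ ((wp (i::α) : Equiv.Perm (Fin r))⁻¹ (pA j) < (wp (i::α))⁻¹ (pB j)) := by
      rw [hBeq] at hd₂'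
      exact (lc_sr_mul j (wp (i::α))).1 hd₂'
    have P1 : (wp (i::α) : Equiv.Perm (Fin r))⁻¹ (pB i) < (wp (i::α))⁻¹ (pA i) :=
      (lc_or_gc i _).resolve_left hNi
    have P2 : (wp (i::α) : Equiv.Perm (Fin r))⁻¹ (pB j) < (wp (i::α))⁻¹ (pA j) :=
      (lc_or_gc j _).resolve_left hNj
    -- descent of j at wp α
    have hdj : (wp α : Equiv.Perm (Fin r))⁻¹ (pB j) < (wp α)⁻¹ (pA j) := by
      rw [hAeq, inv_sr_mul_apply, inv_sr_mul_apply, pAj_eq_pBi hadj, sr_i_pB, sr_i_pBj hadj]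
      calc (wp (i::α) : Equiv.Perm (Fin r))⁻¹ (pB j) < (wp (i::α))⁻¹ (pA j) := P2
        _ = (wp (i::α) : Equiv.Perm (Fin r))⁻¹ (pB i) := by rw [pAj_eq_pBi hadj]
        _ < (wp (i::α) : Equiv.Perm (Fin r))⁻¹ (pA i) := P1
    have hlu := length_sr_mul_of_gt j (wp α) hdj
    -- descent of i at u := sr j * wp α
    have hdi : (simpleRefl r j * (wp α : Equiv.Perm (Fin r)))⁻¹ (pB i)
        < (simpleRefl r j * (wp α : Equiv.Perm (Fin r)))⁻¹ (pA i) := by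
      rw [inv_sr_mul_apply, inv_sr_mul_apply, sr_j_pAi hadj, sr_j_pBi hadj,
        hAeq, inv_sr_mul_apply, inv_sr_mul_apply, sr_i_pA, sr_i_pBj hadj]
      calc (wp (i::α) : Equiv.Perm (Fin r))⁻¹ (pB j) < (wp (i::α))⁻¹ (pA j) := P2
        _ = (wp (i::α) : Equiv.Perm (Fin r))⁻¹ (pB i) := by rw [pAj_eq_pBi hadj]
    have hlv := length_sr_mul_of_gt i _ hdi
    obtain ⟨γ, hγp, hγl⟩ := exists_reduced_word
      (simpleRefl r i * (simpleRefl r j * (wp α : Equiv.Perm (Fin r))))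
    have hγp' : (wp γ : Equiv.Perm (Fin r))
        = simpleRefl r i * (simpleRefl r j * wp α) := hγp
    have hγl' : γ.length
        = permLength (simpleRefl r i * (simpleRefl r j * (wp α : Equiv.Perm (Fin r)))) := hγl
    -- lengths
    have hlen1 : permLength (wp (i::α) : Equiv.Perm (Fin r)) = α.length + 1 := by
      simpa [red, wp] using h₁
    have hlen2 : permLength (wp (i::α) : Equiv.Perm (Fin r)) = β.length + 1 := by
      rw [hp]; simpa [red, wp] using h₂
    -- the word j::i::γ is a reduced word for wp α
    have hjiγ : (wp (j::i::γ) : Equiv.Perm (Fin r)) = wp α := by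
      rw [wp_cons, wp_cons, hγp', sr_mul_sr_mul, sr_mul_sr_mul]
    have hredjiγ : red (j::i::γ) := by
      show permLength (wp (j::i::γ) : Equiv.Perm (Fin r)) = γ.length + 1 + 1
      rw [hjiγ, hlα]
      omega
    have hIH₁ : (Tp q α : Hecke R q r) = Tp q (j::i::γ) := by
      apply ih α.length (by simp at hlen; omega) α (j::i::γ) rfl hjiγ.symm hd₁.1 hredjiγ
    -- the word i::j::γ is a reduced word for wp β
    have hijγ : (wp (i::j::γ) : Equiv.Perm (Fin r)) = wp β := by
      rw [wp_cons, wp_cons, hγp', hAeq]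
      rw [sr_braid_apply hadj, sr_mul_sr_mul, sr_mul_sr_mul, ← hBeq]
    have hredijγ : red (i::j::γ) := by
      show permLength (wp (i::j::γ) : Equiv.Perm (Fin r)) = γ.length + 1 + 1
      rw [hijγ, hlβ]
      omega
    have hIH₂ : (Tp q (i::j::γ) : Hecke R q r) = Tp q β := by
      apply ih (γ.length + 2) (by simp at hlen; omega) (i::j::γ) β (by simp) hijγ hredijγ hd₂.1
    rw [Tp_cons, hIH₁, Tp_cons, Tp_cons, Tp_cons]
    rw [← mul_assoc, ← mul_assoc, Tgen_braid q hadj, mul_assoc, mul_assoc]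
    rw [← Tp_cons, ← Tp_cons, hIH₂, ← Tp_cons]
  -- main argument
  intro l₁ l₂ hlen hp h₁ h₂
  cases l₁ with
  | nil =>
    have h₂' : permLength (wp l₂ : Equiv.Perm (Fin r)) = l₂.length := h₂
    rw [← hp] at h₂'
    have e0 : (wp ([] : List (Fin (r-1))) : Equiv.Perm (Fin r)) = 1 := rfl
    rw [e0, length_one] at h₂'
    rw [List.length_eq_zero_iff.mp h₂'.symm]
  | cons i α =>
    cases l₂ with
    | nil =>
      exfalso
      have h₁' : permLength (wp (i::α) : Equiv.Perm (Fin r)) = (i::α).length := h₁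
      rw [hp] at h₁'
      have e0 : (wp ([] : List (Fin (r-1))) : Equiv.Perm (Fin r)) = 1 := rfl
      rw [e0, length_one] at h₁'
      simp at h₁'
    | cons j β =>
      by_cases hij : i = j
      · subst hij
        rw [Tp_cons, Tp_cons]
        congr 1
        have hd₁ := reduced_cons (i := i) (l := α) (by simpa [red, wp] using h₁)
        have hd₂ := reduced_cons (i := i) (l := β) (by simpa [red, wp] using h₂)
        have hpp : (wp α : Equiv.Perm (Fin r)) = wp β := by
          have e1 : (wp α : Equiv.Perm (Fin r)) = simpleRefl r i * wp (i::α) := by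
            rw [wp_cons, sr_mul_sr_mul]
          have e2 : (wp β : Equiv.Perm (Fin r)) = simpleRefl r i * wp (i::β) := by
            rw [wp_cons, sr_mul_sr_mul]
          rw [e1, e2, hp]
        apply ih α.length (by simp at hlen; omega) α β rfl hpp hd₁.1
        show permLength (wp β : Equiv.Perm (Fin r)) = β.length
        exact hd₂.1
      · have hij' : (i:ℕ) ≠ (j:ℕ) := fun hc => hij (Fin.ext hc)
        rcases (by omega : (i:ℕ)+1 < (j:ℕ) ∨ (j:ℕ)+1 < (i:ℕ) ∨ (j:ℕ) = (i:ℕ)+1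
            ∨ (i:ℕ) = (j:ℕ)+1) with hc|hc|hc|hc
        · exact farcase i j α β (Or.inl hc) hlen hp h₁ h₂
        · exact farcase i j α β (Or.inr hc) hlen hp h₁ h₂
        · exact adjcase i j α β hc hlen hp h₁ h₂
        · refine (adjcase j i β α hc ?_ hp.symm h₂ h₁).symm
          have hlen1 : permLength (wp (i::α) : Equiv.Perm (Fin r)) = (i::α).length := h₁
          have hlen2 : permLength (wp (j::β) : Equiv.Perm (Fin r)) = (j::β).length := h₂
          rw [← hp] at hlen2
          simp only [List.length_cons] at hlen1 hlen2 hlen ⊢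
          omega

end Part7


section Part8
variable {r : ℕ} {R : Type} [CommRing R]

variable (R) in
noncomputable def rho (q : R) (r : ℕ) : Hecke R q r →ₐ[R] Module.End R (M R r) :=
  RingQuot.liftAlgHom R ⟨lam R q r, lam_rel q⟩

lemma rho_Tgen (q : R) (i : Fin (r-1)) : rho R q r (Tgen R q r i) = lop R q i := by
  rw [Tgen, rho, RingQuot.liftAlgHom_mkAlgHom_apply]
  exact FreeAlgebra.lift_ι_apply _ _

lemma rho_Tp (q : R) (l : List (Fin (r-1))) :
    rho R q r (Tp q l) = ((l.map (lop R q)).prod : Module.End R (M R r)) := by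
  show rho R q r ((l.map (Tgen R q r)).prod) = _
  rw [map_list_prod, List.map_map]
  congr 1
  apply List.map_congr_left
  intro i _
  exact rho_Tgen q i

noncomputable def phi (q : R) (r : ℕ) : Hecke R q r →ₗ[R] M R r where
  toFun h := rho R q r h (E R 1)
  map_add' x y := by
    show rho R q r (x + y) (E R 1) = rho R q r x (E R 1) + rho R q r y (E R 1)
    rw [map_add]; rfl
  map_smul' c x := by
    show rho R q r (c • x) (E R 1) = c • (rho R q r x (E R 1))
    rw [map_smul]; rfl

lemma phi_Tp (q : R) (l : List (Fin (r-1))) (h : red l) :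
    phi q r (Tp q l) = E R (wp l : Equiv.Perm (Fin r)) := by
  show rho R q r (Tp q l) (E R 1) = _
  rw [rho_Tp]
  exact lword q l h

/-- a chosen reduced word for each permutation -/
noncomputable def redw (w : Equiv.Perm (Fin r)) : List (Fin (r-1)) :=
  (exists_reduced_word w).choose

lemma redw_prod (w : Equiv.Perm (Fin r)) : (wp (redw w) : Equiv.Perm (Fin r)) = w :=
  (exists_reduced_word w).choose_spec.1

lemma redw_length (w : Equiv.Perm (Fin r)) : (redw w).length = permLength w :=
  (exists_reduced_word w).choose_spec.2

lemma redw_red (w : Equiv.Perm (Fin r)) : red (redw w) := by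
  show permLength (wp (redw w) : Equiv.Perm (Fin r)) = (redw w).length
  rw [redw_prod, redw_length]

/-- the `T_w` family -/
noncomputable def Tfam (q : R) (w : Equiv.Perm (Fin r)) : Hecke R q r := Tp q (redw w)

lemma Tfam_eq (q : R) (w : Equiv.Perm (Fin r)) (l : List (Fin (r-1)))
    (hp : (wp l : Equiv.Perm (Fin r)) = w) (hl : l.length = permLength w) :
    Tfam q w = Tp q l := by
  apply matsumoto q (redw w).length (redw w) l rfl
  · rw [redw_prod, hp]
  · exact redw_red w
  · show permLength (wp l : Equiv.Perm (Fin r)) = l.length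
    rw [hp, hl]

lemma phi_Tfam (q : R) (w : Equiv.Perm (Fin r)) : phi q r (Tfam q w) = E R w := by
  show phi q r (Tp q (redw w)) = E R w
  rw [phi_Tp q _ (redw_red w), redw_prod]

lemma Tfam_one (q : R) : (Tfam q (1 : Equiv.Perm (Fin r)) : Hecke R q r) = 1 := by
  have h0 : (redw (1 : Equiv.Perm (Fin r))).length = 0 := by
    rw [redw_length, length_one]
  rw [Tfam, List.length_eq_zero_iff.mp h0]
  rfl

lemma Tgen_mul_Tfam_ascent (q : R) (i : Fin (r-1)) (w : Equiv.Perm (Fin r))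
    (h : w⁻¹ (pA i) < w⁻¹ (pB i)) :
    Tgen R q r i * Tfam q w = Tfam q (simpleRefl r i * w) := by
  have hp : (wp (i :: redw w) : Equiv.Perm (Fin r)) = simpleRefl r i * w := by
    rw [wp_cons, redw_prod]
  have hl : (i :: redw w).length = permLength (simpleRefl r i * w) := by
    rw [length_sr_mul_of_lt i w h]
    simp [redw_length]
  rw [Tfam_eq q _ _ hp hl, Tp_cons]
  rfl

lemma Tfam_descent (q : R) (i : Fin (r-1)) (w : Equiv.Perm (Fin r))
    (h : w⁻¹ (pB i) < w⁻¹ (pA i)) :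
    Tfam q w = Tgen R q r i * Tfam q (simpleRefl r i * w) := by
  have hp : (wp (i :: redw (simpleRefl r i * w)) : Equiv.Perm (Fin r)) = w := by
    rw [wp_cons, redw_prod, sr_mul_sr_mul]
  have hl : (i :: redw (simpleRefl r i * w)).length = permLength w := by
    have := length_sr_mul_of_gt i w h
    simp [redw_length]
    omega
  rw [Tfam_eq q _ _ hp hl, Tp_cons]
  rfl

lemma Tgen_mul_mem_span (q : R) (i : Fin (r-1)) (s : Hecke R q r)
    (hs : s ∈ Submodule.span R (Set.range (Tfam q : Equiv.Perm (Fin r) → Hecke R q r))) :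
    Tgen R q r i * s ∈
      Submodule.span R (Set.range (Tfam q : Equiv.Perm (Fin r) → Hecke R q r)) := by
  induction hs using Submodule.span_induction with
  | mem x hx =>
    obtain ⟨w, rfl⟩ := hx
    rcases lc_or_gc i w with h|h
    · rw [Tgen_mul_Tfam_ascent q i w h]
      exact Submodule.subset_span ⟨_, rfl⟩
    · rw [Tfam_descent q i w h, ← mul_assoc, Tgen_sq q i]
      rw [sub_mul, add_mul, smul_mul_assoc, smul_mul_assoc, one_mul]
      rw [← Tfam_descent q i w h]
      apply Submodule.sub_mem
      · apply Submodule.add_mem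
        · exact Submodule.smul_mem _ _ (Submodule.subset_span ⟨_, rfl⟩)
        · exact Submodule.smul_mem _ _ (Submodule.subset_span ⟨_, rfl⟩)
      · exact Submodule.subset_span ⟨_, rfl⟩
  | zero => rw [mul_zero]; exact Submodule.zero_mem _
  | add x y _ _ hx hy =>
    rw [mul_add]
    exact Submodule.add_mem _ hx hy
  | smul c x _ hx =>
    rw [mul_smul_comm]
    exact Submodule.smul_mem _ _ hx

lemma span_Tfam_top (q : R) (h : Hecke R q r) :
    h ∈ Submodule.span R (Set.range (Tfam q : Equiv.Perm (Fin r) → Hecke R q r)) := by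
  set S := Submodule.span R (Set.range (Tfam q : Equiv.Perm (Fin r) → Hecke R q r)) with hS
  have hone : (1 : Hecke R q r) ∈ S := by
    rw [← Tfam_one q]
    exact Submodule.subset_span ⟨_, rfl⟩
  obtain ⟨x, rfl⟩ := RingQuot.mkAlgHom_surjective R (HeckeRel R q (r-1)) h
  have key : ∀ (x : FreeAlgebra R (Fin (r-1))), ∀ s ∈ S,
      RingQuot.mkAlgHom R (HeckeRel R q (r-1)) x * s ∈ S := by
    intro x
    induction x using FreeAlgebra.induction with
    | grade0 c =>
      intro s hs
      rw [AlgHom.commutes, ← Algebra.smul_def]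
      exact Submodule.smul_mem _ _ hs
    | grade1 i =>
      intro s hs
      exact Tgen_mul_mem_span q i s hs
    | mul x y hx hy =>
      intro s hs
      rw [map_mul, mul_assoc]
      exact hx _ (hy _ hs)
    | add x y hx hy =>
      intro s hs
      rw [map_add, add_mul]
      exact Submodule.add_mem _ (hx _ hs) (hy _ hs)
  have := key x 1 hone
  rwa [mul_one] at this

lemma phi_surjective (q : R) : Function.Surjective (phi q r) := by
  intro m
  induction m using Finsupp.induction_linear with
  | zero => exact ⟨0, map_zero _⟩
  | add f g hf hg =>
    obtain ⟨x, hx⟩ := hf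
    obtain ⟨y, hy⟩ := hg
    exact ⟨x + y, by rw [map_add, hx, hy]⟩
  | single w c =>
    refine ⟨c • Tfam q w, ?_⟩
    rw [map_smul, phi_Tfam]
    simp [E, Finsupp.smul_single]

lemma phi_injective (q : R) : Function.Injective (phi q r) := by
  rw [← LinearMap.ker_eq_bot]
  rw [Submodule.eq_bot_iff]
  intro h hh
  rw [LinearMap.mem_ker] at hh
  obtain ⟨c, hc⟩ := (Submodule.mem_span_range_iff_exists_fun R).mp (span_Tfam_top q h)
  have hc2 : ∑ w : Equiv.Perm (Fin r), c w • (E R w : M R r) = 0 := by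
    rw [← hh, ← hc, map_sum]
    congr 1
    funext w
    rw [map_smul, phi_Tfam]
  have hzero : ∀ w, c w = 0 := by
    have hli := (Finsupp.basisSingleOne
      (R := R) (ι := Equiv.Perm (Fin r))).linearIndependent
    have := Fintype.linearIndependent_iff.mp hli c (by
      simpa [Finsupp.coe_basisSingleOne, E] using hc2)
    exact this
  rw [← hc]
  simp [hzero]

end Part8

end HeckeWork



/-- The Iwahori–Hecke algebra `ℋ_r` over a commutative domain `R` with
invertible parameter `q` is a free `R`-module with basis `{T_w : w ∈ 𝔖_r}`, where
`T_w = T_{i_1} ⋯ T_{i_s}` for any reduced expression `w = s_{i_1} ⋯ s_{i_s}`. -/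
theorem hecke_free_basis (R : Type) [CommRing R] [IsDomain R] (q : R) (hq : IsUnit q)
    (r : ℕ) :
    ∃ T : Equiv.Perm (Fin r) → Hecke R q r,
      IsTFamily R q r T ∧
      ∃ B : Module.Basis (Equiv.Perm (Fin r)) R (Hecke R q r), ∀ w, B w = T w := by
  refine ⟨HeckeWork.Tfam q, ?_, ?_⟩
  · intro w l hp hl
    exact HeckeWork.Tfam_eq q w l hp.symm hl
  · let e : Hecke R q r ≃ₗ[R] HeckeWork.M R r :=
      LinearEquiv.ofBijective (HeckeWork.phi q r)
        ⟨HeckeWork.phi_injective q, HeckeWork.phi_surjective q⟩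
    refine ⟨(Finsupp.basisSingleOne).map e.symm, ?_⟩
    intro w
    rw [Module.Basis.map_apply]
    have h1 : (Finsupp.basisSingleOne (R := R) (ι := Equiv.Perm (Fin r))) w
        = Finsupp.single w 1 := by
      simp [Finsupp.coe_basisSingleOne]
    rw [h1, LinearEquiv.symm_apply_eq]
    show Finsupp.single w 1 = e (HeckeWork.Tfam q w)
    have h2 : e (HeckeWork.Tfam q w) = HeckeWork.phi q r (HeckeWork.Tfam q w) := rfl
    rw [h2, HeckeWork.phi_Tfam]
    rfl
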